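/- arXiv:2304.03849 — 4 statements merged into one kernel-verified Lean document; each statement's English description precedes it below -/
import Mathlib

section
/- Let E = EuclideanSpace ℝ (Fin n). Let r₁, r₂ : (ℝ → E) → ℝ, let L₁, L₂ ≥ 0, let 0 ≤ a₁ ≤ b₁, 0 ≤ a₂ ≤ b₂, and 0 ≤ a ≤ b be real numbers. For a signal s : ℝ → E and τ ∈ ℝ, write shift_τ s for the signal t ↦ s(τ + t). Assume: (i) for i = 1, 2 and all signals s, z and all M ≥ 0, if ‖s(t) − z(t)‖ ≤ M for all t ∈ [aᵢ, bᵢ] then |rᵢ(s) − rᵢ(z)| ≤ Lᵢ·M; and (ii) for every signal s, the maps τ ↦ r₁(shift_τ s) and τ ↦ r₂(shift_τ s) are continuous. Define ρ₃(s) = max_{t' ∈ [a,b]} min( r₂(shift_{t'} s), min_{t'' ∈ [0,t']} r₁(shift_{t''} s) ). Then for all signals s, z and all M ≥ 0, if ‖s(t) − z(t)‖ ≤ M for all t ∈ [min(a₁, a₂ + a), b + max(b₁, b₂)], then |ρ₃(s) − ρ₃(z)| ≤ max(L₁, L₂)·M. -/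
private lemma abs_ciSup_sub_ciSup_le {ι : Type*} [Nonempty ι] (f g : ι → ℝ) (C : ℝ)
    (hf : BddAbove (Set.range f)) (hg : BddAbove (Set.range g))
    (h : ∀ i, |f i - g i| ≤ C) : |(⨆ i, f i) - ⨆ i, g i| ≤ C := by
  rw [abs_sub_le_iff]
  constructor
  · rw [sub_le_iff_le_add]
    refine ciSup_le fun i => ?_
    have h1 := (abs_sub_le_iff.1 (h i)).1
    have h2 := le_ciSup hg i
    linarith
  · rw [sub_le_iff_le_add]
    refine ciSup_le fun i => ?_
    have h1 := (abs_sub_le_iff.1 (h i)).2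
    have h2 := le_ciSup hf i
    linarith

private lemma abs_ciInf_sub_ciInf_le {ι : Type*} [Nonempty ι] (f g : ι → ℝ) (C : ℝ)
    (hf : BddBelow (Set.range f)) (hg : BddBelow (Set.range g))
    (h : ∀ i, |f i - g i| ≤ C) : |(⨅ i, f i) - ⨅ i, g i| ≤ C := by
  rw [abs_sub_le_iff]
  constructor
  · have key : (⨅ i, f i) - C ≤ ⨅ i, g i := le_ciInf fun i => by
      have h1 := ciInf_le hf i
      have h2 := (abs_sub_le_iff.1 (h i)).1
      linarith
    linarith
  · have key : (⨅ i, g i) - C ≤ ⨅ i, f i := le_ciInf fun i => by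
      have h1 := ciInf_le hg i
      have h2 := (abs_sub_le_iff.1 (h i)).2
      linarith
    linarith

theorem stmt_5 (n : ℕ)
    (r₁ r₂ : (ℝ → EuclideanSpace ℝ (Fin n)) → ℝ)
    (L₁ L₂ a₁ b₁ a₂ b₂ a b : ℝ)
    (hL₁ : 0 ≤ L₁) (hL₂ : 0 ≤ L₂)
    (ha₁ : 0 ≤ a₁) (hab₁ : a₁ ≤ b₁) (ha₂ : 0 ≤ a₂) (hab₂ : a₂ ≤ b₂)
    (ha : 0 ≤ a) (hab : a ≤ b)
    (hr₁ : ∀ (s z : ℝ → EuclideanSpace ℝ (Fin n)) (M : ℝ), 0 ≤ M →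
      (∀ t ∈ Set.Icc a₁ b₁, ‖s t - z t‖ ≤ M) → |r₁ s - r₁ z| ≤ L₁ * M)
    (hr₂ : ∀ (s z : ℝ → EuclideanSpace ℝ (Fin n)) (M : ℝ), 0 ≤ M →
      (∀ t ∈ Set.Icc a₂ b₂, ‖s t - z t‖ ≤ M) → |r₂ s - r₂ z| ≤ L₂ * M)
    (hc₁ : ∀ s : ℝ → EuclideanSpace ℝ (Fin n),
      Continuous (fun τ : ℝ => r₁ (fun t => s (τ + t))))
    (hc₂ : ∀ s : ℝ → EuclideanSpace ℝ (Fin n),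
      Continuous (fun τ : ℝ => r₂ (fun t => s (τ + t))))
    (ρ₃ : (ℝ → EuclideanSpace ℝ (Fin n)) → ℝ)
    (hρ₃ : ∀ s, ρ₃ s = ⨆ t' : Set.Icc a b,
      min (r₂ (fun t => s ((t' : ℝ) + t)))
        (⨅ t'' : Set.Icc (0:ℝ) (t' : ℝ), r₁ (fun t => s ((t'' : ℝ) + t)))) :
    ∀ (s z : ℝ → EuclideanSpace ℝ (Fin n)) (M : ℝ), 0 ≤ M →
      (∀ t ∈ Set.Icc (min a₁ (a₂ + a)) (b + max b₁ b₂), ‖s t - z t‖ ≤ M) →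
      |ρ₃ s - ρ₃ z| ≤ max L₁ L₂ * M := by
  intro s z M hM hsz
  set L := max L₁ L₂ with hL
  have hLM : 0 ≤ L * M := mul_nonneg (le_trans hL₁ (le_max_left _ _)) hM
  -- nonempty index types
  haveI hne : Nonempty (Set.Icc a b) := Set.nonempty_Icc_subtype hab
  -- pointwise bound on r₁ shifts
  have key₁ : ∀ τ : ℝ, 0 ≤ τ → τ ≤ b →
      |r₁ (fun t => s (τ + t)) - r₁ (fun t => z (τ + t))| ≤ L * M := by
    intro τ hτ0 hτb
    refine le_trans (hr₁ _ _ M hM fun t ht => ?_)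
      (mul_le_mul_of_nonneg_right (le_max_left _ _) hM)
    refine hsz _ ⟨?_, ?_⟩
    · exact le_trans (min_le_left _ _) (by linarith [ht.1])
    · have := ht.2
      have : τ + t ≤ b + b₁ := by linarith
      exact this.trans (by linarith [le_max_left b₁ b₂])
  have key₂ : ∀ τ : ℝ, a ≤ τ → τ ≤ b →
      |r₂ (fun t => s (τ + t)) - r₂ (fun t => z (τ + t))| ≤ L * M := by
    intro τ hτa hτb
    refine le_trans (hr₂ _ _ M hM fun t ht => ?_)
      (mul_le_mul_of_nonneg_right (le_max_right _ _) hM)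
    refine hsz _ ⟨?_, ?_⟩
    · exact le_trans (min_le_right _ _) (by linarith [ht.1])
    · have := ht.2
      have : τ + t ≤ b + b₂ := by linarith
      exact this.trans (by linarith [le_max_right b₁ b₂])
  -- boundedness facts
  have bdd₁ : ∀ (w : ℝ → EuclideanSpace ℝ (Fin n)) (c : ℝ), 0 ≤ c →
      BddBelow (Set.range fun t'' : Set.Icc (0:ℝ) c => r₁ (fun t => w ((t'' : ℝ) + t))) := by
    intro w c hc
    have : Set.range (fun t'' : Set.Icc (0:ℝ) c => r₁ (fun t => w ((t'' : ℝ) + t)))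
        = (fun τ : ℝ => r₁ (fun t => w (τ + t))) '' Set.Icc 0 c :=
      (Set.image_eq_range (fun τ : ℝ => r₁ (fun t => w (τ + t))) (Set.Icc 0 c)).symm
    rw [this]
    exact (isCompact_Icc.image (hc₁ w)).bddBelow
  have bddFull : ∀ (w : ℝ → EuclideanSpace ℝ (Fin n)),
      BddAbove (Set.range fun t' : Set.Icc a b =>
        min (r₂ (fun t => w ((t' : ℝ) + t)))
          (⨅ t'' : Set.Icc (0:ℝ) (t' : ℝ), r₁ (fun t => w ((t'' : ℝ) + t)))) := by
    intro w
    have h2 : BddAbove ((fun τ : ℝ => r₂ (fun t => w (τ + t))) '' Set.Icc a b) :=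
      (isCompact_Icc.image (hc₂ w)).bddAbove
    obtain ⟨B, hB⟩ := h2
    refine ⟨B, ?_⟩
    rintro x ⟨t', rfl⟩
    exact le_trans (min_le_left _ _) (hB ⟨t', t'.2, rfl⟩)
  rw [hρ₃ s, hρ₃ z]
  refine abs_ciSup_sub_ciSup_le _ _ _ (bddFull s) (bddFull z) fun t' => ?_
  haveI : Nonempty (Set.Icc (0:ℝ) (t':ℝ)) :=
    Set.nonempty_Icc_subtype (le_trans ha t'.2.1)
  refine le_trans (abs_min_sub_min_le_max _ _ _ _) (max_le ?_ ?_)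
  · exact key₂ t' t'.2.1 t'.2.2
  · refine abs_ciInf_sub_ciInf_le _ _ _
      (bdd₁ s t' (le_trans ha t'.2.1)) (bdd₁ z t' (le_trans ha t'.2.1)) fun t'' => ?_
    exact key₁ t'' t''.2.1 (le_trans t''.2.2 t'.2.2)
end

section
/- Fix n and a family of atomic functions h : A → (EuclideanSpace ℝ (Fin n) → ℝ) such that each h(μ) is 1-Lipschitz and bounded (there is B_μ with |h(μ)(x)| ≤ B_μ for all x). Define STL formulas over A inductively: ψ ::= atom μ | ¬ψ | ψ₁ ∧ ψ₂ | ψ₁ ∨ ψ₂ | ψ₁ U_{[a,b]} ψ₂, where in each until operator 0 ≤ a ≤ b are real numbers. Define the robustness ρ_ψ : (ℝ → EuclideanSpace ℝ (Fin n)) → ℝ → ℝ recursively by: ρ_{atom μ}(s, t) = h(μ)(s(t)); ρ_{¬ψ}(s, t) = −ρ_ψ(s, t); ρ_{ψ₁∧ψ₂}(s, t) = min(ρ_{ψ₁}(s, t), ρ_{ψ₂}(s, t)); ρ_{ψ₁∨ψ₂}(s, t) = max(ρ_{ψ₁}(s, t), ρ_{ψ₂}(s, t)); ρ_{ψ₁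 U_{[a,b]} ψ₂}(s, t) = sup_{t' ∈ [t+a, t+b]} min( ρ_{ψ₂}(s, t'), inf_{t'' ∈ [t, t']} ρ_{ψ₁}(s, t'') ). Then for every STL formula ψ there exist a constant L ≥ 0 and reals 0 ≤ a_ψ ≤ b_ψ such that for all signals s, z : ℝ → EuclideanSpace ℝ (Fin n) and all M ≥ 0: if ‖s(τ) − z(τ)‖ ≤ M for all τ ∈ [a_ψ, b_ψ], then |ρ_ψ(s, 0) − ρ_ψ(z, 0)| ≤ L·M. -/
/-- STL formulas over a type `A` of atomic propositions.  Each `until`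
operator carries real time bounds `a b` with `0 ≤ a ≤ b`. -/
inductive STLFormula (A : Type) : Type where
  | atom : A → STLFormula A
  | not : STLFormula A → STLFormula A
  | and : STLFormula A → STLFormula A → STLFormula A
  | or : STLFormula A → STLFormula A → STLFormula A
  | untl : (a b : ℝ) → 0 ≤ a → a ≤ b → STLFormula A → STLFormula A → STLFormula A

/-- The robustness measure of an STL formula, given robustness functions
`h μ` for the atomic propositions. -/
noncomputable def STLFormula.rob {A : Type} {n : ℕ}
    (h : A → EuclideanSpace ℝ (Fin n) → ℝ) :
    STLFormula A → (ℝ → EuclideanSpace ℝ (Fin n)) → ℝ → ℝ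
  | .atom μ, s, t => h μ (s t)
  | .not ψ, s, t => -(ψ.rob h s t)
  | .and ψ₁ ψ₂, s, t => min (ψ₁.rob h s t) (ψ₂.rob h s t)
  | .or ψ₁ ψ₂, s, t => max (ψ₁.rob h s t) (ψ₂.rob h s t)
  | .untl a b _ _ ψ₁ ψ₂, s, t =>
      ⨆ t' : Set.Icc (t + a) (t + b),
        min (ψ₂.rob h s t') (⨅ t'' : Set.Icc t (t' : ℝ), ψ₁.rob h s t'')

private lemma myBddAbove {ι : Type*} {f : ι → ℝ} {C : ℝ} (hf : ∀ i, |f i| ≤ C) :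
    BddAbove (Set.range f) := by
  refine ⟨C, ?_⟩
  rintro x ⟨i, rfl⟩
  exact (abs_le.1 (hf i)).2

private lemma myBddBelow {ι : Type*} {f : ι → ℝ} {C : ℝ} (hf : ∀ i, |f i| ≤ C) :
    BddBelow (Set.range f) := by
  refine ⟨-C, ?_⟩
  rintro x ⟨i, rfl⟩
  exact (abs_le.1 (hf i)).1

private lemma abs_ciSup_le {ι : Type*} [Nonempty ι] {f : ι → ℝ} {C : ℝ}
    (hf : ∀ i, |f i| ≤ C) : |⨆ i, f i| ≤ C := by
  rw [abs_le]
  constructor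
  · exact le_trans (abs_le.1 (hf (Classical.arbitrary ι))).1 (le_ciSup (myBddAbove hf) _)
  · exact ciSup_le fun i => (abs_le.1 (hf i)).2

private lemma abs_ciInf_le {ι : Type*} [Nonempty ι] {f : ι → ℝ} {C : ℝ}
    (hf : ∀ i, |f i| ≤ C) : |⨅ i, f i| ≤ C := by
  rw [abs_le]
  constructor
  · exact le_ciInf fun i => (abs_le.1 (hf i)).1
  · exact le_trans (ciInf_le (myBddBelow hf) (Classical.arbitrary ι)) (abs_le.1 (hf _)).2

private lemma abs_ciSup_sub_ciSup {ι : Type*} [Nonempty ι] {f g : ι → ℝ} {c : ℝ}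
    (hfb : BddAbove (Set.range f)) (hgb : BddAbove (Set.range g))
    (hp : ∀ i, |f i - g i| ≤ c) : |(⨆ i, f i) - ⨆ i, g i| ≤ c := by
  rw [abs_sub_le_iff]
  constructor
  · rw [sub_le_iff_le_add]
    refine ciSup_le fun i => ?_
    have h1 := le_ciSup hgb i
    have h2 := (abs_le.1 (hp i)).2
    linarith
  · rw [sub_le_iff_le_add]
    refine ciSup_le fun i => ?_
    have h1 := le_ciSup hfb i
    have h2 := (abs_le.1 (hp i)).1
    linarith

private lemma abs_ciInf_sub_ciInf {ι : Type*} [Nonempty ι] {f g : ι → ℝ} {c : ℝ}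
    (hfb : BddBelow (Set.range f)) (hgb : BddBelow (Set.range g))
    (hp : ∀ i, |f i - g i| ≤ c) : |(⨅ i, f i) - ⨅ i, g i| ≤ c := by
  rw [abs_sub_le_iff]
  constructor
  · have key : (⨅ i, f i) - c ≤ ⨅ i, g i := le_ciInf fun i => by
      have h1 := ciInf_le hfb i
      have h2 := (abs_le.1 (hp i)).2
      linarith
    linarith
  · have key : (⨅ i, g i) - c ≤ ⨅ i, f i := le_ciInf fun i => by
      have h1 := ciInf_le hgb i
      have h2 := (abs_le.1 (hp i)).1
      linarith
    linarith

private lemma abs_min_le' {x y C D : ℝ} (hx : |x| ≤ C) (hy : |y| ≤ D) :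
    |min x y| ≤ max C D := by
  rw [abs_le] at *
  constructor
  · exact le_min (le_trans (neg_le_neg (le_max_left C D)) hx.1)
      (le_trans (neg_le_neg (le_max_right C D)) hy.1)
  · exact le_trans (min_le_left x y) (le_trans hx.2 (le_max_left C D))

private lemma abs_max_le' {x y C D : ℝ} (hx : |x| ≤ C) (hy : |y| ≤ D) :
    |max x y| ≤ max C D := by
  rw [abs_le] at *
  constructor
  · exact le_trans (neg_le_neg (le_max_left C D)) (le_trans hx.1 (le_max_left x y))
  · exact max_le (le_trans hx.2 (le_max_left C D)) (le_trans hy.2 (le_max_right C D))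

private lemma rob_bdd {A : Type} {n : ℕ}
    (h : A → EuclideanSpace ℝ (Fin n) → ℝ)
    (hbdd : ∀ μ, ∃ B : ℝ, ∀ x, |h μ x| ≤ B) :
    ∀ ψ : STLFormula A, ∃ B : ℝ, ∀ s t, |ψ.rob h s t| ≤ B := by
  intro ψ
  induction ψ with
  | atom μ =>
    obtain ⟨B, hB⟩ := hbdd μ
    exact ⟨B, fun s t => hB _⟩
  | not ψ ih =>
    obtain ⟨B, hB⟩ := ih
    refine ⟨B, fun s t => ?_⟩
    simpa [STLFormula.rob, abs_neg] using hB s t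
  | and ψ₁ ψ₂ ih₁ ih₂ =>
    obtain ⟨B₁, hB₁⟩ := ih₁
    obtain ⟨B₂, hB₂⟩ := ih₂
    refine ⟨max B₁ B₂, fun s t => ?_⟩
    simpa [STLFormula.rob] using abs_min_le' (hB₁ s t) (hB₂ s t)
  | or ψ₁ ψ₂ ih₁ ih₂ =>
    obtain ⟨B₁, hB₁⟩ := ih₁
    obtain ⟨B₂, hB₂⟩ := ih₂
    refine ⟨max B₁ B₂, fun s t => ?_⟩
    simpa [STLFormula.rob] using abs_max_le' (hB₁ s t) (hB₂ s t)
  | untl a b ha hab ψ₁ ψ₂ ih₁ ih₂ =>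
    obtain ⟨B₁, hB₁⟩ := ih₁
    obtain ⟨B₂, hB₂⟩ := ih₂
    refine ⟨max B₂ B₁, fun s t => ?_⟩
    haveI : Nonempty (Set.Icc (t + a) (t + b)) :=
      (Set.nonempty_Icc.2 (by linarith)).to_subtype
    show |⨆ t' : Set.Icc (t + a) (t + b), _| ≤ _
    refine abs_ciSup_le fun t' => ?_
    haveI : Nonempty (Set.Icc t (t' : ℝ)) :=
      (Set.nonempty_Icc.2 (le_trans (by linarith) t'.2.1)).to_subtype
    exact abs_min_le' (hB₂ s t') (abs_ciInf_le fun t'' => hB₁ s t'')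

private lemma rob_lip {A : Type} {n : ℕ}
    (h : A → EuclideanSpace ℝ (Fin n) → ℝ)
    (hlip : ∀ μ, LipschitzWith 1 (h μ))
    (hbdd : ∀ μ, ∃ B : ℝ, ∀ x, |h μ x| ≤ B) :
    ∀ ψ : STLFormula A, ∃ L : ℝ, 0 ≤ L ∧ ∃ a b : ℝ, 0 ≤ a ∧ a ≤ b ∧
      ∀ (s z : ℝ → EuclideanSpace ℝ (Fin n)) (M t : ℝ), 0 ≤ M →
        (∀ τ ∈ Set.Icc (t + a) (t + b), ‖s τ - z τ‖ ≤ M) →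
        |ψ.rob h s t - ψ.rob h z t| ≤ L * M := by
  intro ψ
  induction ψ with
  | atom μ =>
    refine ⟨1, zero_le_one, 0, 0, le_refl 0, le_refl 0, fun s z M t hM hyp => ?_⟩
    have key := (hlip μ).dist_le_mul (s t) (z t)
    rw [NNReal.coe_one, one_mul, Real.dist_eq, dist_eq_norm] at key
    have h2 := hyp t (by simp)
    simp only [STLFormula.rob, one_mul]
    linarith
  | not ψ ih =>
    obtain ⟨L, hL, a, b, ha, hab, key⟩ := ih
    refine ⟨L, hL, a, b, ha, hab, fun s z M t hM hyp => ?_⟩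
    simp only [STLFormula.rob, neg_sub_neg]
    rw [abs_sub_comm]
    exact key s z M t hM hyp
  | and ψ₁ ψ₂ ih₁ ih₂ =>
    obtain ⟨L₁, hL₁, a₁, b₁, ha₁, hab₁, key₁⟩ := ih₁
    obtain ⟨L₂, hL₂, a₂, b₂, ha₂, hab₂, key₂⟩ := ih₂
    refine ⟨max L₁ L₂, le_trans hL₁ (le_max_left _ _), min a₁ a₂, max b₁ b₂,
      le_min ha₁ ha₂, le_trans (min_le_left _ _) (le_trans hab₁ (le_max_left _ _)),
      fun s z M t hM hyp => ?_⟩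
    have d₁ : |ψ₁.rob h s t - ψ₁.rob h z t| ≤ L₁ * M := by
      refine key₁ s z M t hM fun τ hτ => hyp τ ⟨?_, ?_⟩
      · exact le_trans (by simp [min_le_left, min_le_right]) hτ.1
      · exact le_trans hτ.2 (by simp [le_max_left, le_max_right])
    have d₂ : |ψ₂.rob h s t - ψ₂.rob h z t| ≤ L₂ * M := by
      refine key₂ s z M t hM fun τ hτ => hyp τ ⟨?_, ?_⟩
      · exact le_trans (by simp [min_le_left, min_le_right]) hτ.1
      · exact le_trans hτ.2 (by simp [le_max_left, le_max_right])
    simp only [STLFormula.rob]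
    refine le_trans (abs_min_sub_min_le_max _ _ _ _) ?_
    rw [max_mul_of_nonneg _ _ hM]
    exact max_le_max d₁ d₂
  | or ψ₁ ψ₂ ih₁ ih₂ =>
    obtain ⟨L₁, hL₁, a₁, b₁, ha₁, hab₁, key₁⟩ := ih₁
    obtain ⟨L₂, hL₂, a₂, b₂, ha₂, hab₂, key₂⟩ := ih₂
    refine ⟨max L₁ L₂, le_trans hL₁ (le_max_left _ _), min a₁ a₂, max b₁ b₂,
      le_min ha₁ ha₂, le_trans (min_le_left _ _) (le_trans hab₁ (le_max_left _ _)),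
      fun s z M t hM hyp => ?_⟩
    have d₁ : |ψ₁.rob h s t - ψ₁.rob h z t| ≤ L₁ * M := by
      refine key₁ s z M t hM fun τ hτ => hyp τ ⟨?_, ?_⟩
      · exact le_trans (by simp [min_le_left, min_le_right]) hτ.1
      · exact le_trans hτ.2 (by simp [le_max_left, le_max_right])
    have d₂ : |ψ₂.rob h s t - ψ₂.rob h z t| ≤ L₂ * M := by
      refine key₂ s z M t hM fun τ hτ => hyp τ ⟨?_, ?_⟩
      · exact le_trans (by simp [min_le_left, min_le_right]) hτ.1
      · exact le_trans hτ.2 (by simp [le_max_left, le_max_right])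
    simp only [STLFormula.rob]
    refine le_trans (abs_max_sub_max_le_max _ _ _ _) ?_
    rw [max_mul_of_nonneg _ _ hM]
    exact max_le_max d₁ d₂
  | untl a b ha hab ψ₁ ψ₂ ih₁ ih₂ =>
    obtain ⟨L₁, hL₁, a₁, b₁, ha₁, hab₁, key₁⟩ := ih₁
    obtain ⟨L₂, hL₂, a₂, b₂, ha₂, hab₂, key₂⟩ := ih₂
    obtain ⟨B₁, hB₁⟩ := rob_bdd h hbdd ψ₁
    obtain ⟨B₂, hB₂⟩ := rob_bdd h hbdd ψ₂
    refine ⟨max L₁ L₂, le_trans hL₁ (le_max_left _ _), min a₁ (a + a₂), max (b + b₁) (b + b₂),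
      le_min ha₁ (by linarith), le_trans (min_le_left _ _)
        (le_trans hab₁ (le_trans (by linarith) (le_max_left _ _))),
      fun s z M t hM hyp => ?_⟩
    haveI : Nonempty (Set.Icc (t + a) (t + b)) :=
      (Set.nonempty_Icc.2 (by linarith)).to_subtype
    simp only [STLFormula.rob]
    set F : Set.Icc (t + a) (t + b) → ℝ := fun t' =>
      min (ψ₂.rob h s t') (⨅ t'' : Set.Icc t (t' : ℝ), ψ₁.rob h s t'') with hF
    set G : Set.Icc (t + a) (t + b) → ℝ := fun t' =>
      min (ψ₂.rob h z t') (⨅ t'' : Set.Icc t (t' : ℝ), ψ₁.rob h z t'') with hG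
    have hFb : ∀ t', |F t'| ≤ max B₂ B₁ := by
      intro t'
      haveI : Nonempty (Set.Icc t (t' : ℝ)) :=
        (Set.nonempty_Icc.2 (le_trans (by linarith) t'.2.1)).to_subtype
      exact abs_min_le' (hB₂ s t') (abs_ciInf_le fun t'' => hB₁ s t'')
    have hGb : ∀ t', |G t'| ≤ max B₂ B₁ := by
      intro t'
      haveI : Nonempty (Set.Icc t (t' : ℝ)) :=
        (Set.nonempty_Icc.2 (le_trans (by linarith) t'.2.1)).to_subtype
      exact abs_min_le' (hB₂ z t') (abs_ciInf_le fun t'' => hB₁ z t'')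
    refine le_trans (abs_ciSup_sub_ciSup (myBddAbove hFb) (myBddAbove hGb) ?_) (le_refl _)
    intro t'
    haveI : Nonempty (Set.Icc t (t' : ℝ)) :=
      (Set.nonempty_Icc.2 (le_trans (by linarith) t'.2.1)).to_subtype
    have ht'1 : t + a ≤ (t' : ℝ) := t'.2.1
    have ht'2 : (t' : ℝ) ≤ t + b := t'.2.2
    -- difference for ψ₂ at t'
    have d₂ : |ψ₂.rob h s t' - ψ₂.rob h z t'| ≤ L₂ * M := by
      refine key₂ s z M t' hM fun τ hτ => hyp τ ⟨?_, ?_⟩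
      · have : t + min a₁ (a + a₂) ≤ t + (a + a₂) := by
          have := min_le_right a₁ (a + a₂); linarith
        have : t + (a + a₂) ≤ (t' : ℝ) + a₂ := by linarith
        linarith [min_le_right a₁ (a + a₂), hτ.1]
      · have : (t' : ℝ) + b₂ ≤ t + max (b + b₁) (b + b₂) := by
          have := le_max_right (b + b₁) (b + b₂); linarith
        linarith [hτ.2]
    -- difference for the inf of ψ₁
    have d₁ : |(⨅ t'' : Set.Icc t (t' : ℝ), ψ₁.rob h s t'') -
        ⨅ t'' : Set.Icc t (t' : ℝ), ψ₁.rob h z t''| ≤ L₁ * M := by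
      refine abs_ciInf_sub_ciInf (myBddBelow fun t'' => hB₁ s t'')
        (myBddBelow fun t'' => hB₁ z t'') fun t'' => ?_
      refine key₁ s z M t'' hM fun τ hτ => hyp τ ⟨?_, ?_⟩
      · have h1 : t ≤ (t'' : ℝ) := t''.2.1
        linarith [min_le_left a₁ (a + a₂), hτ.1]
      · have h2 : (t'' : ℝ) ≤ (t' : ℝ) := t''.2.2
        have h3 := le_max_left (b + b₁) (b + b₂)
        linarith [hτ.2]
    have := abs_min_sub_min_le_max (ψ₂.rob h s t')
      (⨅ t'' : Set.Icc t (t' : ℝ), ψ₁.rob h s t'')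
      (ψ₂.rob h z t') (⨅ t'' : Set.Icc t (t' : ℝ), ψ₁.rob h z t'')
    refine le_trans this ?_
    rw [show max L₁ L₂ * M = max (L₂ * M) (L₁ * M) by
      rw [max_comm L₁ L₂, max_mul_of_nonneg _ _ hM]]
    exact max_le_max d₂ d₁

theorem stmt_6 {A : Type} {n : ℕ}
    (h : A → EuclideanSpace ℝ (Fin n) → ℝ)
    (hlip : ∀ μ, LipschitzWith 1 (h μ))
    (hbdd : ∀ μ, ∃ B : ℝ, ∀ x, |h μ x| ≤ B) :
    ∀ ψ : STLFormula A, ∃ L : ℝ, 0 ≤ L ∧ ∃ a b : ℝ, 0 ≤ a ∧ a ≤ b ∧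
      ∀ (s z : ℝ → EuclideanSpace ℝ (Fin n)) (M : ℝ), 0 ≤ M →
        (∀ τ ∈ Set.Icc a b, ‖s τ - z τ‖ ≤ M) →
        |ψ.rob h s 0 - ψ.rob h z 0| ≤ L * M := by
  intro ψ
  obtain ⟨L, hL, a, b, ha, hab, key⟩ := rob_lip h hlip hbdd ψ
  refine ⟨L, hL, a, b, ha, hab, fun s z M hM hyp => ?_⟩
  refine key s z M 0 hM fun τ hτ => hyp τ ?_
  simpa using hτ
end

section
/- Let n, m be positive natural numbers, f : (Fin n → ℝ) → (Fin n → ℝ) an arbitrary function, and g : (Fin n → ℝ) → Matrix (Fin n) (Fin m) ℝ such that g(x)·g(x)ᵀ is positive definite for every x. Let s : ℝ → (Fin n → ℝ) be differentiable, let ρ ≥ 0 and L be real numbers, and let α : ℝ → ℝ be monotone increasing with α(0) = 0. Define h(x, t) = ρ² − L²·‖x − s(t)‖², where ‖·‖ is the Euclidean norm. Then for every x ∈ (Fin n → ℝ) and every t ∈ ℝ, there exists u ∈ (Fin m → ℝ) such that (−2L²)·( (x − s(t)) ⬝ᵥ (f(x) + g(x) *ᵥ u) ) + 2L²·( (x −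 s(t)) ⬝ᵥ deriv s(t) ) ≥ −α(h(x, t)). -/
open Matrix

/-- The Euclidean norm on `Fin n → ℝ`, `‖v‖ = √(v ⬝ᵥ v)`. -/
noncomputable def euclNorm {n : ℕ} (v : Fin n → ℝ) : ℝ := Real.sqrt (v ⬝ᵥ v)

theorem stmt_9 (n m : ℕ) (hn : 0 < n) (hm : 0 < m)
    (f : (Fin n → ℝ) → (Fin n → ℝ))
    (g : (Fin n → ℝ) → Matrix (Fin n) (Fin m) ℝ)
    (hg : ∀ x, ((g x) * (g x)ᵀ).PosDef)
    (s : ℝ → (Fin n → ℝ)) (hs : Differentiable ℝ s)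
    (ρ L : ℝ) (hρ : 0 ≤ ρ)
    (α : ℝ → ℝ) (hα : Monotone α) (hα0 : α 0 = 0)
    (h : (Fin n → ℝ) → ℝ → ℝ)
    (hdef : ∀ x t, h x t = ρ ^ 2 - L ^ 2 * (euclNorm (x - s t)) ^ 2) :
    ∀ (x : Fin n → ℝ) (t : ℝ), ∃ u : Fin m → ℝ,
      (-2 * L ^ 2) * ((x - s t) ⬝ᵥ (f x + (g x) *ᵥ u)) +
        2 * L ^ 2 * ((x - s t) ⬝ᵥ deriv s t) ≥ -α (h x t) := by
  intro x t
  set v : Fin n → ℝ := x - s t with hv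
  by_cases hL : L ^ 2 * (euclNorm v) ^ 2 = 0
  · -- LHS with u = 0 : everything scaled by L² or v vanishes? not quite; v could be nonzero with L = 0.
    refine ⟨0, ?_⟩
    have hh : h x t = ρ ^ 2 := by rw [hdef, ← hv, hL]; ring
    have hα' : 0 ≤ α (h x t) := by
      rw [hh]; rw [← hα0]; exact hα (by positivity)
    rcases mul_eq_zero.mp hL with h1 | h2
    · have hL0 : L = 0 := by nlinarith [sq_nonneg L]
      simp [hL0]
      linarith
    · have hv0 : v = 0 := by
        have h3 : Real.sqrt (v ⬝ᵥ v) = 0 := by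
          have := sq_eq_zero_iff.mp h2
          simpa [euclNorm] using this
        have h4 : v ⬝ᵥ v = 0 := by
          have hnn : 0 ≤ v ⬝ᵥ v :=
            Finset.sum_nonneg fun i _ => mul_self_nonneg _
          nlinarith [Real.sq_sqrt hnn, h3]
        exact (dotProduct_self_eq_zero).mp h4
      rw [hv0]
      simp
      linarith
  · -- L ≠ 0 and v ≠ 0: use posdef to steer
    have hL2 : L ^ 2 ≠ 0 := fun h0 => hL (by rw [h0]; ring)
    have hvne : v ≠ 0 := by
      intro h0
      apply hL
      rw [h0]
      simp [euclNorm]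
    have hA : 0 < v ⬝ᵥ ((g x * (g x)ᵀ) *ᵥ v) := by
      have := (hg x).dotProduct_mulVec_pos hvne
      simpa using this
    set A : ℝ := v ⬝ᵥ ((g x) *ᵥ ((g x)ᵀ *ᵥ v)) with hAdef
    have hApos : 0 < A := by rwa [hAdef, mulVec_mulVec]
    set K : ℝ := (-2 * L ^ 2) * (v ⬝ᵥ f x) + 2 * L ^ 2 * (v ⬝ᵥ deriv s t) with hK
    have hB : (-2 * L ^ 2) * A ≠ 0 := by
      intro h0
      rcases mul_eq_zero.mp h0 with h1 | h2
      · exact hL2 (by linarith [mul_eq_zero.mp (by linarith [h1] : (-2 : ℝ) * L ^ 2 = 0)])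
      · exact hApos.ne' h2
    refine ⟨((-α (h x t) - K) / ((-2 * L ^ 2) * A)) • ((g x)ᵀ *ᵥ v), ?_⟩
    set c : ℝ := (-α (h x t) - K) / ((-2 * L ^ 2) * A) with hc
    have hdot : v ⬝ᵥ ((g x) *ᵥ (c • ((g x)ᵀ *ᵥ v))) = c * A := by
      rw [mulVec_smul, dotProduct_smul, hAdef]
      simp [smul_eq_mul]
    have key : (-2 * L ^ 2) * (v ⬝ᵥ (f x + (g x) *ᵥ (c • ((g x)ᵀ *ᵥ v)))) +
        2 * L ^ 2 * (v ⬝ᵥ deriv s t) = K + (-2 * L ^ 2) * (c * A) := by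
      rw [dotProduct_add, hdot, hK]; ring
    rw [key]
    have : (-2 * L ^ 2) * (c * A) = -α (h x t) - K := by
      have hL0 : L ≠ 0 := fun h0 => hL2 (by rw [h0]; ring)
      rw [hc]
      field_simp
    rw [this]
    simp [ge_iff_le]
end

section
/- Let T > 0, let F : EuclideanSpace ℝ (Fin 2) → ℝ be 1-Lipschitz, and let G : EuclideanSpace ℝ (Fin 2) → ℝ → ℝ be continuous in both arguments jointly with G(·, t) 1-Lipschitz for each t ∈ ℝ. Let Π : EuclideanSpace ℝ (Fin 3) → EuclideanSpace ℝ (Fin 2) denote the projection onto the first two coordinates. For a continuous signal s : ℝ → EuclideanSpace ℝ (Fin 3), define ρ(s) = min( F(Π(s(T))), min_{t ∈ [0, T]} G(Π(s(t)), t) ). Then for all continuous signals s, z : ℝ → EuclideanSpace ℝ (Fin 3) and all M ≥ 0: if ‖Π(s(t)) − Π(z(t))‖ ≤ M for all t ∈ [0, T], then |ρ(s) − ρ(z)| ≤ M. -/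
/-- Projection of `ℝ³` onto its first two coordinates. -/
def projPlane (v : EuclideanSpace ℝ (Fin 3)) : EuclideanSpace ℝ (Fin 2) :=
  WithLp.toLp 2 (fun i => v (Fin.castSucc i))

lemma projPlane_cont : Continuous projPlane := by
  unfold projPlane
  exact (PiLp.continuous_toLp 2 _).comp (continuous_pi fun i => (PiLp.continuous_apply 2 _ _))

theorem stmt_12 (T : ℝ) (hT : 0 < T)
    (F : EuclideanSpace ℝ (Fin 2) → ℝ) (hF : LipschitzWith 1 F)
    (G : EuclideanSpace ℝ (Fin 2) → ℝ → ℝ)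
    (hGcont : Continuous (fun q : EuclideanSpace ℝ (Fin 2) × ℝ => G q.1 q.2))
    (hGlip : ∀ t : ℝ, LipschitzWith 1 (fun x => G x t))
    (ρ : (ℝ → EuclideanSpace ℝ (Fin 3)) → ℝ)
    (hρ : ∀ s : ℝ → EuclideanSpace ℝ (Fin 3),
      ρ s = min (F (projPlane (s T))) (⨅ t : Set.Icc (0:ℝ) T, G (projPlane (s t)) t)) :
    ∀ (s z : ℝ → EuclideanSpace ℝ (Fin 3)), Continuous s → Continuous z →
      ∀ M : ℝ, 0 ≤ M →
      (∀ t ∈ Set.Icc (0:ℝ) T, ‖projPlane (s t) - projPlane (z t)‖ ≤ M) →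
      |ρ s - ρ z| ≤ M := by
  intro s z hs hz M hM hbound
  rw [hρ s, hρ z]
  set f : Set.Icc (0:ℝ) T → ℝ := fun t => G (projPlane (s t)) t with hf
  set g : Set.Icc (0:ℝ) T → ℝ := fun t => G (projPlane (z t)) t with hg
  have hne : Nonempty (Set.Icc (0:ℝ) T) := ⟨⟨0, le_refl 0, le_of_lt hT⟩⟩
  have hfc : Continuous f :=
    hGcont.comp ((projPlane_cont.comp (hs.comp continuous_subtype_val)).prodMk
      continuous_subtype_val)
  have hgc : Continuous g :=
    hGcont.comp ((projPlane_cont.comp (hz.comp continuous_subtype_val)).prodMk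
      continuous_subtype_val)
  have hfb : BddBelow (Set.range f) :=
    (isCompact_range hfc).bddBelow
  have hgb : BddBelow (Set.range g) :=
    (isCompact_range hgc).bddBelow
  -- pointwise bound
  have hpt : ∀ t : Set.Icc (0:ℝ) T, |f t - g t| ≤ M := by
    intro t
    have := (hGlip t).dist_le_mul (projPlane (s t)) (projPlane (z t))
    rw [Real.dist_eq] at this
    simpa [dist_eq_norm] using this.trans (by
      simpa [dist_eq_norm] using hbound t t.2)
  -- F bound
  have hFpt : |F (projPlane (s T)) - F (projPlane (z T))| ≤ M := by
    have := hF.dist_le_mul (projPlane (s T)) (projPlane (z T))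
    rw [Real.dist_eq] at this
    simpa [dist_eq_norm] using this.trans (by
      simpa [dist_eq_norm] using hbound T ⟨le_of_lt hT, le_refl T⟩)
  -- iInf bound
  have hinf : |(⨅ t, f t) - ⨅ t, g t| ≤ M := by
    have h1 : (⨅ t, f t) - M ≤ ⨅ t, g t := by
      apply le_ciInf
      intro t
      have := ciInf_le hfb t
      have h2 := abs_sub_le_iff.mp (hpt t)
      linarith [h2.1]
    have h2 : (⨅ t, g t) - M ≤ ⨅ t, f t := by
      apply le_ciInf
      intro t
      have := ciInf_le hgb t
      have h2 := abs_sub_le_iff.mp (hpt t)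
      linarith [h2.2]
    rw [abs_sub_le_iff]
    constructor <;> linarith
  calc |min (F (projPlane (s T))) (⨅ t, f t) - min (F (projPlane (z T))) (⨅ t, g t)|
      ≤ max |F (projPlane (s T)) - F (projPlane (z T))| |(⨅ t, f t) - ⨅ t, g t| :=
        abs_min_sub_min_le_max _ _ _ _
    _ ≤ M := max_le hFpt hinf
end
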